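/- There exist constants c₁, c₂ > 0 such that for every integer l ≥ 3, c₁ · l^{1/2} ≤ Σ_{l₁ = ⌈l/3⌉}^{⌊2l/3⌋} C(l₁, l − l₁, l)² ≤ c₂ · l^{1/2}. -/

import Mathlib

open scoped BigOperators

noncomputable section

set_option maxHeartbeats 1000000

/-- Zero-projection Clebsch–Gordan coefficient of `SO(3)`. -/
def CG0 (l₁ l₂ l₃ : ℕ) : ℝ :=
  if Even (l₁ + l₂ + l₃) ∧ l₃ ≤ l₁ + l₂ ∧ l₁ ≤ l₂ + l₃ ∧ l₂ ≤ l₁ + l₃ then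
    (-1 : ℝ) ^ ((l₁ + l₂ + l₃) / 2 - l₃) * Real.sqrt (2 * (l₃ : ℝ) + 1) *
      (((l₁ + l₂ + l₃) / 2).factorial : ℝ) /
      ((((l₁ + l₂ + l₃) / 2 - l₃).factorial : ℝ) * (((l₁ + l₂ + l₃) / 2 - l₂).factorial : ℝ) *
        (((l₁ + l₂ + l₃) / 2 - l₁).factorial : ℝ)) *
      Real.sqrt ((((l₁ + l₂ - l₃).factorial : ℝ) * ((l₁ + l₃ - l₂).factorial : ℝ) *
        ((l₂ + l₃ - l₁).factorial : ℝ)) / ((l₁ + l₂ + l₃ + 1).factorial : ℝ))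
  else 0

/-- helper: compare `a√x ≤ b√y` by squaring. -/
lemma aux_sqrt_mul_le {a b x y : ℝ} (ha : 0 ≤ a) (hb : 0 ≤ b)
    (h : a ^ 2 * x ≤ b ^ 2 * y) : a * Real.sqrt x ≤ b * Real.sqrt y := by
  rw [show a * Real.sqrt x = Real.sqrt (a ^ 2 * x) by
      rw [Real.sqrt_mul (sq_nonneg a), Real.sqrt_sq ha],
    show b * Real.sqrt y = Real.sqrt (b ^ 2 * y) by
      rw [Real.sqrt_mul (sq_nonneg b), Real.sqrt_sq hb]]
  exact Real.sqrt_le_sqrt h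

lemma aux_le_of_sq_le {a b : ℝ} (ha : 0 ≤ a) (hb : 0 ≤ b) (h : a^2 ≤ b^2) : a ≤ b := by
  nlinarith

/-- lower bound on the central binomial coefficient. -/
lemma aux_cb_low : ∀ n : ℕ, 1 ≤ n →
    (4 : ℝ) ^ n ≤ 2 * Real.sqrt n * Nat.centralBinom n := by
  intro n hn
  induction n with
  | zero => omega
  | succ m ih =>
    rcases Nat.eq_or_lt_of_le hn with h1 | h1
    · have : m = 0 := by omega
      subst this
      have hc : Nat.centralBinom 1 = 2 := by decide
      rw [hc]
      norm_num [Real.sqrt_one]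
    · have hm : 1 ≤ m := by omega
      have IH := ih hm
      have hm0 : (0:ℝ) ≤ m := Nat.cast_nonneg m
      have hrec : ((m:ℝ) + 1) * Nat.centralBinom (m+1) = 2 * (2 * m + 1) * Nat.centralBinom m := by
        exact_mod_cast congrArg (Nat.cast (R := ℝ)) (Nat.succ_mul_centralBinom_succ m)
      have hBm : (0:ℝ) < Nat.centralBinom m := by exact_mod_cast Nat.centralBinom_pos m
      have hmpos : (0:ℝ) < (m:ℝ) + 1 := by positivity
      have hkey : 2 * ((m:ℝ)+1) * Real.sqrt m ≤ (2*(m:ℝ)+1) * Real.sqrt ((m:ℝ)+1) := by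
        apply aux_sqrt_mul_le (by positivity) (by positivity)
        nlinarith
      have hcast : ((m+1 : ℕ) : ℝ) = (m:ℝ) + 1 := by push_cast; ring
      rw [hcast]
      rw [← mul_le_mul_iff_right₀ hmpos]
      calc ((m:ℝ)+1) * 4^(m+1) = (4*((m:ℝ)+1)) * 4^m := by ring
        _ ≤ (4*((m:ℝ)+1)) * (2*Real.sqrt m*Nat.centralBinom m) :=
            mul_le_mul_of_nonneg_left IH (by positivity)
        _ = (4*(Nat.centralBinom m : ℝ)) * (2*((m:ℝ)+1)*Real.sqrt m) := by ring
        _ ≤ (4*(Nat.centralBinom m : ℝ)) * ((2*(m:ℝ)+1)*Real.sqrt ((m:ℝ)+1)) :=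
            mul_le_mul_of_nonneg_left hkey (by positivity)
        _ = 2 * Real.sqrt ((m:ℝ)+1) * (2 * (2*(m:ℝ)+1) * Nat.centralBinom m) := by ring
        _ = 2 * Real.sqrt ((m:ℝ)+1) * (((m:ℝ)+1) * Nat.centralBinom (m+1)) := by rw [hrec]
        _ = ((m:ℝ)+1) * (2 * Real.sqrt ((m:ℝ)+1) * Nat.centralBinom (m+1)) := by ring

/-- upper bound on the central binomial coefficient. -/
lemma aux_cb_high : ∀ n : ℕ,
    Real.sqrt (3 * (n:ℝ) + 1) * Nat.centralBinom n ≤ (4 : ℝ) ^ n := by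
  intro n
  induction n with
  | zero => simp [Nat.centralBinom]
  | succ m ih =>
    have hm0 : (0:ℝ) ≤ m := Nat.cast_nonneg m
    have hrec : ((m:ℝ) + 1) * Nat.centralBinom (m+1) = 2 * (2 * m + 1) * Nat.centralBinom m := by
      exact_mod_cast congrArg (Nat.cast (R := ℝ)) (Nat.succ_mul_centralBinom_succ m)
    have hBm : (0:ℝ) < Nat.centralBinom m := by exact_mod_cast Nat.centralBinom_pos m
    have hmpos : (0:ℝ) < (m:ℝ) + 1 := by positivity
    have hcast : ((m+1 : ℕ) : ℝ) = (m:ℝ) + 1 := by push_cast; ring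
    rw [hcast]
    rw [← mul_le_mul_iff_right₀ hmpos]
    have hkey : (2*(2*(m:ℝ)+1)) * Real.sqrt (3*((m:ℝ)+1)+1) ≤ (4*((m:ℝ)+1)) * Real.sqrt (3*(m:ℝ)+1) := by
      apply aux_sqrt_mul_le (by positivity) (by positivity)
      nlinarith
    calc ((m:ℝ)+1) * (Real.sqrt (3*((m:ℝ)+1)+1) * Nat.centralBinom (m+1))
        = Real.sqrt (3*((m:ℝ)+1)+1) * (((m:ℝ)+1) * Nat.centralBinom (m+1)) := by ring
      _ = Real.sqrt (3*((m:ℝ)+1)+1) * (2 * (2*(m:ℝ)+1) * Nat.centralBinom m) := by rw [hrec]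
      _ = ((2*(2*(m:ℝ)+1)) * Real.sqrt (3*((m:ℝ)+1)+1)) * Nat.centralBinom m := by ring
      _ ≤ ((4*((m:ℝ)+1)) * Real.sqrt (3*(m:ℝ)+1)) * Nat.centralBinom m :=
          mul_le_mul_of_nonneg_right hkey (le_of_lt hBm)
      _ = (4*((m:ℝ)+1)) * (Real.sqrt (3*(m:ℝ)+1) * Nat.centralBinom m) := by ring
      _ ≤ (4*((m:ℝ)+1)) * 4^m := mul_le_mul_of_nonneg_left ih (by positivity)
      _ = ((m:ℝ)+1) * 4^(m+1) := by ring

lemma aux_cb_fac (n : ℕ) :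
    (Nat.centralBinom n : ℝ) = ((2*n).factorial : ℝ) / (n.factorial * n.factorial) := by
  rw [eq_div_iff (by positivity)]
  have h := Nat.choose_mul_factorial_mul_factorial (show n ≤ 2*n by omega)
  rw [show 2*n - n = n by omega] at h
  rw [Nat.centralBinom]
  rw [← mul_assoc]
  exact_mod_cast congrArg (Nat.cast (R := ℝ)) h

/-- value of the squared CG coefficient. -/
lemma aux_cg_sq (l k : ℕ) (hk : k ≤ l) :
    CG0 k (l - k) l ^ 2 =
      (Nat.centralBinom k * Nat.centralBinom (l - k) : ℝ) / Nat.centralBinom l := by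
  have hcond : Even (k + (l-k) + l) ∧ l ≤ k + (l-k) ∧ k ≤ (l-k) + l ∧ (l-k) ≤ k + l :=
    ⟨⟨l, by omega⟩, by omega, by omega, by omega⟩
  rw [CG0, if_pos hcond]
  have e1 : (k + (l-k) + l)/2 = l := by omega
  have e2 : k + (l-k) - l = 0 := by omega
  have e3 : k + l - (l-k) = 2*k := by omega
  have e4 : (l-k) + l - k = 2*(l-k) := by omega
  have e5 : k + (l-k) + l + 1 = 2*l + 1 := by omega
  rw [e1, e2, e3, e4, e5, Nat.sub_self]
  rw [show l - (l - k) = k by omega]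
  simp only [pow_zero, Nat.factorial_zero, Nat.cast_one, one_mul]
  have hx : (0:ℝ) ≤ (((2*k).factorial : ℝ) * ((2*(l-k)).factorial : ℝ)) / ((2*l+1).factorial : ℝ) := by
    positivity
  rw [mul_pow, div_pow, mul_pow, Real.sq_sqrt hx,
    Real.sq_sqrt (show (0:ℝ) ≤ 2*(l:ℝ)+1 by positivity)]
  rw [aux_cb_fac k, aux_cb_fac (l-k), aux_cb_fac l]
  have hfs : ((2*l+1).factorial : ℝ) = (2*(l:ℝ)+1) * ((2*l).factorial : ℝ) := by
    rw [Nat.factorial_succ]; push_cast; ring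
  rw [hfs]
  have h1 : (k.factorial : ℝ) ≠ 0 := by positivity
  have h2 : ((l-k).factorial : ℝ) ≠ 0 := by positivity
  have h3 : (l.factorial : ℝ) ≠ 0 := by positivity
  have h4 : ((2*l).factorial : ℝ) ≠ 0 := by positivity
  have h5 : (2*(l:ℝ)+1) ≠ 0 := by positivity
  field_simp

/-- pure real-arithmetic core of the term bounds. -/
lemma aux_real_bounds (K M L BK BM BL sk sm sl s3k s3m s3l fk fm fl : ℝ)
    (hK : 1 ≤ K) (hM : 1 ≤ M) (hL : 1 ≤ L) (hKM : K + M = L)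
    (h3K : L ≤ 3*K) (h3M : L ≤ 3*M)
    (hBK : 0 < BK) (hBM : 0 < BM) (hBL : 0 < BL)
    (hsk : 0 ≤ sk) (hsm : 0 ≤ sm) (hsl : 0 ≤ sl)
    (hs3k : 0 ≤ s3k) (hs3m : 0 ≤ s3m) (hs3l : 0 ≤ s3l)
    (sqK : sk^2 = K) (sqM : sm^2 = M) (sqL : sl^2 = L)
    (sq3K : s3k^2 = 3*K+1) (sq3M : s3m^2 = 3*M+1) (sq3L : s3l^2 = 3*L+1)
    (hf : fk * fm = fl)
    (A1 : fk ≤ 2 * sk * BK) (A2 : fm ≤ 2 * sm * BM) (A3 : fl ≤ 2 * sl * BL)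
    (B1 : s3k * BK ≤ fk) (B2 : s3m * BM ≤ fm) (B3 : s3l * BL ≤ fl) :
    1/(2*sl) ≤ BK * BM / BL ∧ BK * BM / BL ≤ 2/sl := by
  have hsq : ∀ s c : ℝ, 0 ≤ s → s^2 = c → 1 ≤ c → 0 < s := by
    intro s c h0 hs hc
    rcases lt_or_eq_of_le h0 with h | h
    · exact h
    · exfalso; rw [← h] at hs; simp at hs; linarith
  have hslpos : 0 < sl := hsq sl L hsl sqL hL
  have hs3lpos : 0 < s3l := hsq s3l (3*L+1) hs3l sq3L (by linarith)
  have hs3kpos : 0 < s3k := hsq s3k (3*K+1) hs3k sq3K (by linarith)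
  have hs3mpos : 0 < s3m := hsq s3m (3*M+1) hs3m sq3M (by linarith)
  have hskpos : 0 < sk := hsq sk K hsk sqK hK
  have hsmpos : 0 < sm := hsq sm M hsm sqM hM
  have hfk : 0 < fk := lt_of_lt_of_le (mul_pos hs3kpos hBK) B1
  have hfm : 0 < fm := lt_of_lt_of_le (mul_pos hs3mpos hBM) B2
  constructor
  · rw [div_le_div_iff₀ (by positivity) hBL, one_mul, ← mul_le_mul_iff_right₀ hs3lpos]
    calc s3l * BL ≤ fl := B3
      _ = fk * fm := hf.symm
      _ ≤ (2 * sk * BK) * (2 * sm * BM) := by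
          exact mul_le_mul A1 A2 (le_of_lt hfm) (by positivity)
      _ = (4 * (sk * sm)) * (BK * BM) := by ring
      _ ≤ (2 * sl * s3l) * (BK * BM) := by
          apply mul_le_mul_of_nonneg_right _ (by positivity)
          apply aux_le_of_sq_le (by positivity) (by positivity)
          have e1 : (4 * (sk * sm))^2 = 16 * (sk^2 * sm^2) := by ring
          have e2 : (2 * sl * s3l)^2 = 4 * (sl^2 * s3l^2) := by ring
          rw [e1, e2, sqK, sqM, sqL, sq3L]
          nlinarith [sq_nonneg (K - M)]
      _ = s3l * (BK * BM * (2 * sl)) := by ring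
  · rw [div_le_div_iff₀ hBL hslpos]
    have hc : (0:ℝ) < s3k * s3m := mul_pos hs3kpos hs3mpos
    rw [← mul_le_mul_iff_left₀ hc]
    calc BK * BM * sl * (s3k * s3m)
        = sl * ((s3k * BK) * (s3m * BM)) := by ring
      _ ≤ sl * (fk * fm) := by
          apply mul_le_mul_of_nonneg_left _ hsl
          exact mul_le_mul B1 B2 (by positivity) (le_of_lt hfk)
      _ = sl * fl := by rw [hf]
      _ ≤ sl * (2 * sl * BL) := by
          apply mul_le_mul_of_nonneg_left A3 hsl
      _ = 2 * L * BL := by rw [show sl * (2 * sl * BL) = 2 * sl^2 * BL by ring, sqL]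
      _ ≤ 2 * BL * (s3k * s3m) := by
          rw [show 2 * L * BL = (2 * BL) * L by ring,
            show 2 * BL * (s3k * s3m) = (2 * BL) * (s3k * s3m) by ring]
          apply mul_le_mul_of_nonneg_left _ (by positivity)
          apply aux_le_of_sq_le (by linarith) (by positivity)
          have e : (s3k * s3m)^2 = s3k^2 * s3m^2 := by ring
          rw [e, sq3K, sq3M]
          have h9 : L * L ≤ (3*K) * (3*M) := mul_le_mul h3K h3M (by linarith) (by positivity)
          nlinarith [h9]

lemma aux_term_bounds (l k : ℕ) (hk1 : 1 ≤ k) (hm1 : 1 ≤ l - k) (hk2 : k ≤ l)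
    (h3k : l ≤ 3*k) (h3m : l ≤ 3*(l-k)) :
    1/(2*Real.sqrt l) ≤ (Nat.centralBinom k * Nat.centralBinom (l-k) : ℝ) / Nat.centralBinom l ∧
    (Nat.centralBinom k * Nat.centralBinom (l-k) : ℝ) / Nat.centralBinom l ≤ 2/Real.sqrt l := by
  have hl1 : 1 ≤ l := le_trans hk1 hk2
  have hKM : (k:ℝ) + ((l-k : ℕ):ℝ) = (l:ℝ) := by
    have : k + (l - k) = l := by omega
    exact_mod_cast congrArg (Nat.cast (R := ℝ)) this
  have hpow : (4:ℝ)^k * (4:ℝ)^(l-k) = (4:ℝ)^l := by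
    rw [← pow_add]; congr 1; omega
  exact aux_real_bounds (k:ℝ) ((l-k:ℕ):ℝ) (l:ℝ)
    (Nat.centralBinom k) (Nat.centralBinom (l-k)) (Nat.centralBinom l)
    (Real.sqrt k) (Real.sqrt ((l-k:ℕ):ℝ)) (Real.sqrt l)
    (Real.sqrt (3*(k:ℝ)+1)) (Real.sqrt (3*((l-k:ℕ):ℝ)+1)) (Real.sqrt (3*(l:ℝ)+1))
    ((4:ℝ)^k) ((4:ℝ)^(l-k)) ((4:ℝ)^l)
    (by exact_mod_cast hk1) (by exact_mod_cast hm1) (by exact_mod_cast hl1) hKM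
    (by exact_mod_cast h3k) (by exact_mod_cast h3m)
    (by exact_mod_cast Nat.centralBinom_pos k)
    (by exact_mod_cast Nat.centralBinom_pos (l-k))
    (by exact_mod_cast Nat.centralBinom_pos l)
    (Real.sqrt_nonneg _) (Real.sqrt_nonneg _) (Real.sqrt_nonneg _)
    (Real.sqrt_nonneg _) (Real.sqrt_nonneg _) (Real.sqrt_nonneg _)
    (Real.sq_sqrt (by positivity)) (Real.sq_sqrt (by positivity))
    (Real.sq_sqrt (by positivity)) (Real.sq_sqrt (by positivity))
    (Real.sq_sqrt (by positivity)) (Real.sq_sqrt (by positivity))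
    hpow (aux_cb_low k hk1) (aux_cb_low (l-k) hm1) (aux_cb_low l hl1)
    (aux_cb_high k) (aux_cb_high (l-k)) (aux_cb_high l)

/-- There are `c₁, c₂ > 0` such that for every `l ≥ 3`,
`c₁ l^{1/2} ≤ Σ_{l₁=⌈l/3⌉}^{⌊2l/3⌋} C(l₁, l−l₁, l)² ≤ c₂ l^{1/2}`. -/
theorem cg_central_sum_asymptotics :
    ∃ c₁ c₂ : ℝ, 0 < c₁ ∧ 0 < c₂ ∧
      ∀ l : ℕ, 3 ≤ l →
        c₁ * (l : ℝ) ^ ((1 : ℝ) / 2) ≤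
            ∑ l₁ ∈ Finset.Icc ((l + 2) / 3) (2 * l / 3), CG0 l₁ (l - l₁) l ^ 2 ∧
          ∑ l₁ ∈ Finset.Icc ((l + 2) / 3) (2 * l / 3), CG0 l₁ (l - l₁) l ^ 2 ≤
            c₂ * (l : ℝ) ^ ((1 : ℝ) / 2) := by
  refine ⟨1/9, 2, by norm_num, by norm_num, ?_⟩
  intro l hl
  have hrpow : ((l : ℝ)) ^ ((1 : ℝ) / 2) = Real.sqrt l := (Real.sqrt_eq_rpow _).symm
  set a := (l + 2) / 3 with ha
  set b := 2 * l / 3 with hb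
  have hS : Real.sqrt (l:ℝ) ^ 2 = (l:ℝ) := Real.sq_sqrt (by positivity)
  have hSpos : (0:ℝ) < Real.sqrt l := Real.sqrt_pos.mpr (by exact_mod_cast (show 0 < l by omega))
  have hmem : ∀ k ∈ Finset.Icc a b, CG0 k (l - k) l ^ 2 =
      (Nat.centralBinom k * Nat.centralBinom (l-k) : ℝ) / Nat.centralBinom l := by
    intro k hk
    rw [Finset.mem_Icc] at hk
    exact aux_cg_sq l k (by omega)
  have hbound : ∀ k ∈ Finset.Icc a b,
      1/(2*Real.sqrt l) ≤ (Nat.centralBinom k * Nat.centralBinom (l-k) : ℝ) / Nat.centralBinom l ∧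
      (Nat.centralBinom k * Nat.centralBinom (l-k) : ℝ) / Nat.centralBinom l ≤ 2/Real.sqrt l := by
    intro k hk
    rw [Finset.mem_Icc] at hk
    exact aux_term_bounds l k (by omega) (by omega) (by omega) (by omega) (by omega)
  rw [Finset.sum_congr rfl hmem, hrpow]
  have hcard : (Finset.Icc a b).card = b + 1 - a := Nat.card_Icc a b
  have hcard_low : 2 * l ≤ 9 * (Finset.Icc a b).card := by rw [hcard]; omega
  have hcard_high : (Finset.Icc a b).card ≤ l := by rw [hcard]; omega
  have hcl : (2:ℝ) * l ≤ 9 * ((Finset.Icc a b).card : ℝ) := by exact_mod_cast hcard_low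
  have hch : ((Finset.Icc a b).card : ℝ) ≤ (l:ℝ) := by exact_mod_cast hcard_high
  constructor
  · have h1 := Finset.card_nsmul_le_sum (Finset.Icc a b) _ (1/(2*Real.sqrt l))
      (fun k hk => (hbound k hk).1)
    rw [nsmul_eq_mul] at h1
    refine le_trans ?_ h1
    rw [mul_one_div, le_div_iff₀ (by positivity)]
    rw [show 1/9 * Real.sqrt (l:ℝ) * (2 * Real.sqrt l) = 2/9 * Real.sqrt (l:ℝ)^2 by ring, hS]
    linarith
  · have h1 := Finset.sum_le_card_nsmul (Finset.Icc a b) _ (2/Real.sqrt l)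
      (fun k hk => (hbound k hk).2)
    rw [nsmul_eq_mul] at h1
    refine le_trans h1 ?_
    rw [mul_div_assoc'  , div_le_iff₀ hSpos]
    rw [show 2 * Real.sqrt (l:ℝ) * Real.sqrt l = 2 * Real.sqrt (l:ℝ)^2 by ring, hS]
    linarith

end
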